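/- Let A be a left brace and let a ∈ A. (i) If a ⋆ a = 0, then the subbrace generated by a satisfies br(a) = ⟨a⟩ (the additive cyclic subgroup generated by a), and on br(a) the multiplication coincides with the addition. (ii) If a ∈ ζ(⋆,A), then ⟨a⟩ is an ideal of A. (iii) If a ∈ ζ₂(⋆,A), then br(a) = ⟨a⟩ + ⟨a ⋆ a⟩. -/

import Mathlib

/-!
Basic theory of left braces (skew left braces of abelian type), following
Dixon–Kurdachenko–Subbotin, "On the structure of braces whose subideals are ideals".
-/

universe u v

/-- A left brace: an abelian group `(A,+)`, a group `(A,·)`, satisfying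
`a(b+c) = ab + ac - a`.  (The additive and multiplicative identities then coincide.) -/
class LeftBrace (A : Type u) extends AddCommGroup A, Group A where
  mul_add_eq : ∀ a b c : A, a * (b + c) = a * b + a * c - a

namespace LeftBrace

variable {A : Type u} [LeftBrace A]

/-- The star operation `a ⋆ b = ab - a - b`. -/
def bstar (a b : A) : A := a * b - a - b

/-- A subset of a left brace is a subbrace if it is closed under the additive-group
and multiplicative-group operations (equivalently, it is a left brace under the
restricted operations). -/
structure IsSubbrace (S : Set A) : Prop where
  zero_mem : (0 : A) ∈ S
  add_mem : ∀ {a b : A}, a ∈ S → b ∈ S → a + b ∈ S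
  neg_mem : ∀ {a : A}, a ∈ S → -a ∈ S
  mul_mem : ∀ {a b : A}, a ∈ S → b ∈ S → a * b ∈ S
  inv_mem : ∀ {a : A}, a ∈ S → a⁻¹ ∈ S

/-- `I` is an ideal of the subbrace `J`: `I ⊆ J`, both are subbraces, and
`a ⋆ z, z ⋆ a ∈ I` for all `a ∈ J`, `z ∈ I`. -/
structure IsIdealIn (I J : Set A) : Prop where
  subset : I ⊆ J
  subbrace : IsSubbrace I
  ambient_subbrace : IsSubbrace J
  star_mem_left : ∀ a ∈ J, ∀ z ∈ I, bstar a z ∈ I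
  star_mem_right : ∀ a ∈ J, ∀ z ∈ I, bstar z a ∈ I

/-- `I` is an ideal of the brace `A`. -/
def IsIdeal (I : Set A) : Prop := IsIdealIn I (Set.univ : Set A)

/-- `A` is a T-brace if being an ideal is a transitive relation: an ideal of an
ideal of `A` is an ideal of `A`. -/
def IsTBrace (A : Type u) [LeftBrace A] : Prop :=
  ∀ I J : Set A, IsIdealIn I J → IsIdeal J → IsIdeal I

/-- The `⋆`-center `ζ(⋆,A) = {a | a ⋆ x = x ⋆ a = 0 for all x}`. -/
def starCenter (A : Type u) [LeftBrace A] : Set A :=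
  {a : A | ∀ x : A, bstar a x = 0 ∧ bstar x a = 0}

/-- The preimage in `A` of the `⋆`-center of the quotient of `A` by (the ideal) `S`:
`a` belongs to it iff `a ⋆ x ∈ S` and `x ⋆ a ∈ S` for every `x ∈ A`. -/
def nextCenter (A : Type u) [LeftBrace A] (S : Set A) : Set A :=
  {a : A | ∀ x : A, bstar a x ∈ S ∧ bstar x a ∈ S}

/-- The upper `⋆`-central series, indexed by naturals:
`ζ₀(⋆,A) = 0` and `ζ_{n+1}(⋆,A)/ζ_n(⋆,A) = ζ(⋆, A/ζ_n(⋆,A))`. -/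
def zetaNat (A : Type u) [LeftBrace A] : ℕ → Set A
  | 0 => ({0} : Set A)
  | n + 1 => nextCenter A (zetaNat A n)

/-- The upper `⋆`-central series, indexed by ordinals (unions at limit ordinals). -/
noncomputable def zetaOrd (A : Type u) [LeftBrace A] (o : Ordinal.{v}) : Set A :=
  Ordinal.limitRecOn o (({0} : Set A))
    (fun _ ih => nextCenter A ih)
    (fun o _ ih => ⋃ (o' : Ordinal) (h : o' < o), ih o' h)

/-- The upper `⋆`-hypercenter `ζ_∞(⋆,A)`: the final (stable) term of the upper
`⋆`-central series, i.e. the union of all its terms. -/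
noncomputable def starHypercenter (A : Type u) [LeftBrace A] : Set A :=
  ⋃ o : Ordinal.{u}, zetaOrd A o

/-- `A` is `⋆`-hypercentral if `A = ζ_γ(⋆,A)` for some ordinal `γ`. -/
def IsStarHypercentral (A : Type u) [LeftBrace A] : Prop :=
  ∃ γ : Ordinal.{u}, zetaOrd A γ = (Set.univ : Set A)

/-- `K ⋆ L`: the additive subgroup of `(A,+)` generated by all `x ⋆ y`, `x ∈ K`, `y ∈ L`. -/
def setStar (K L : Set A) : AddSubgroup A :=
  AddSubgroup.closure {z : A | ∃ x ∈ K, ∃ y ∈ L, z = bstar x y}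

/-- `rightStarSeries A n = A^{(n+1)}`, where `A^{(1)} = A` and `A^{(n+1)} = A^{(n)} ⋆ A`. -/
def rightStarSeries (A : Type u) [LeftBrace A] : ℕ → Set A
  | 0 => (Set.univ : Set A)
  | n + 1 => ((setStar (rightStarSeries A n) (Set.univ : Set A) : AddSubgroup A) : Set A)

/-- `leftStarSeries A n = A^{n+1}`, where `A^1 = A` and `A^{n+1} = A ⋆ A^n`. -/
def leftStarSeries (A : Type u) [LeftBrace A] : ℕ → Set A
  | 0 => (Set.univ : Set A)
  | n + 1 => ((setStar (Set.univ : Set A) (leftStarSeries A n) : AddSubgroup A) : Set A)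

/-- `A` is Smoktunowicz-nilpotent if `A^{(n)} = A^k = 0` for some naturals `n, k`. -/
def IsSmoktunowiczNilpotent (A : Type u) [LeftBrace A] : Prop :=
  ∃ n k : ℕ, rightStarSeries A n = ({0} : Set A) ∧ leftStarSeries A k = ({0} : Set A)

/-- The subbrace generated by a subset `M`: the intersection of all subbraces containing `M`. -/
def braceClosure (M : Set A) : Set A := ⋂₀ {S : Set A | IsSubbrace S ∧ M ⊆ S}

end LeftBrace

section Aux

open LeftBrace

variable {A : Type u} [LeftBrace A]

lemma lb_mul_zero (a : A) : a * 0 = a := by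
  have h := LeftBrace.mul_add_eq a 0 0
  rw [add_zero] at h
  have h2 : a * 0 + (a - a * 0) = (a * 0 + a * 0 - a) + (a - a * 0) := by rw [← h]
  rw [show a * 0 + (a - a * 0) = a by abel,
      show (a * 0 + a * 0 - a) + (a - a * 0) = a * 0 by abel] at h2
  exact h2.symm

lemma lb_one_eq_zero : (1 : A) = 0 :=
  (lb_mul_zero 1).symm.trans (one_mul 0)

lemma lb_zero_mul (a : A) : 0 * a = a := by
  rw [← lb_one_eq_zero, one_mul]

lemma lb_bstar_add (a b c : A) : bstar a (b + c) = bstar a b + bstar a c := by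
  unfold bstar
  rw [LeftBrace.mul_add_eq]
  abel

/-- `bstar a ·` as an additive homomorphism. -/
def bstarHom (a : A) : A →+ A := AddMonoidHom.mk' (bstar a) (lb_bstar_add a)

lemma lb_bstar_zsmul (a : A) (n : ℤ) (b : A) : bstar a (n • b) = n • bstar a b :=
  map_zsmul (bstarHom a) n b

lemma lb_mul_eq (a b : A) : a * b = bstar a b + a + b := by
  unfold bstar; abel

lemma lb_bstar_zero (a : A) : bstar a 0 = 0 := by
  unfold bstar; rw [lb_mul_zero]; abel

lemma lb_zero_bstar (a : A) : bstar 0 a = 0 := by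
  unfold bstar; rw [lb_zero_mul]; abel

lemma mem_starCenter {a : A} :
    a ∈ starCenter A ↔ ∀ x : A, bstar a x = 0 ∧ bstar x a = 0 := Iff.rfl

lemma central_mul {c : A} (hc : c ∈ starCenter A) (x : A) : c * x = c + x := by
  have h := (hc x).1
  rw [bstar, sub_sub, sub_eq_zero] at h
  exact h

lemma mul_central {c : A} (hc : c ∈ starCenter A) (x : A) : x * c = x + c := by
  have h := (hc x).2
  rw [bstar, sub_sub, sub_eq_zero] at h
  exact h

lemma central_inv_eq_neg {c : A} (hc : c ∈ starCenter A) : c⁻¹ = -c := by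
  apply inv_eq_of_mul_eq_one_right
  rw [central_mul hc, add_neg_cancel, lb_one_eq_zero]

lemma starCenter_zero : (0 : A) ∈ starCenter A := fun x =>
  ⟨lb_zero_bstar x, lb_bstar_zero x⟩

lemma starCenter_add {a b : A} (ha : a ∈ starCenter A) (hb : b ∈ starCenter A) :
    a + b ∈ starCenter A := by
  intro x
  constructor
  · have h1 : (a + b) * x = a + b + x := by
      rw [← central_mul ha b, mul_assoc, central_mul hb x, LeftBrace.mul_add_eq,
        central_mul ha b, central_mul ha x]
      abel
    rw [bstar, h1]; abel
  · rw [lb_bstar_add, (ha x).2, (hb x).2, add_zero]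

lemma starCenter_neg {a : A} (ha : a ∈ starCenter A) : -a ∈ starCenter A := by
  have hinv : a⁻¹ = -a := central_inv_eq_neg ha
  intro x
  constructor
  · have h1 : (-a) * x = -a + x := by
      rw [← hinv]
      have h2 : a * (a⁻¹ * x) = x := by rw [← mul_assoc, mul_inv_cancel, lb_one_eq_zero, lb_zero_mul]
      have h3 : a * (a⁻¹ * x) = a + a⁻¹ * x := central_mul ha _
      rw [h2] at h3
      have : a⁻¹ * x = x - a :=
        eq_sub_of_add_eq (by rw [add_comm]; exact h3.symm)
      rw [this, hinv]; abel
    rw [bstar, h1]; abel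
  · have : bstar x (-a) = - bstar x a := by
      have := lb_bstar_zsmul x (-1) a
      simpa using this
    rw [this, (ha x).2, neg_zero]

lemma starCenter_zsmul {a : A} (ha : a ∈ starCenter A) (n : ℤ) : n • a ∈ starCenter A := by
  induction n using Int.induction_on with
  | zero => rw [zero_zsmul]; exact starCenter_zero
  | succ i ih =>
      rw [add_zsmul, one_zsmul]
      exact starCenter_add ih ha
  | pred i ih =>
      rw [sub_zsmul, one_zsmul]
      exact starCenter_add ih (starCenter_neg ha)

lemma LeftBrace.IsSubbrace.zsmul_mem {S : Set A} (hS : IsSubbrace S) {a : A} (ha : a ∈ S) (n : ℤ) :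
    n • a ∈ S := by
  induction n using Int.induction_on with
  | zero => rw [zero_zsmul]; exact hS.zero_mem
  | succ i ih => rw [add_zsmul, one_zsmul]; exact hS.add_mem ih ha
  | pred i ih =>
      rw [sub_zsmul, one_zsmul]
      exact hS.add_mem ih (hS.neg_mem ha)

lemma isSubbrace_univ : IsSubbrace (Set.univ : Set A) :=
  ⟨trivial, fun _ _ => trivial, fun _ => trivial, fun _ _ => trivial, fun _ => trivial⟩

lemma zetaNat_one_eq : zetaNat A 1 = starCenter A := by
  ext a
  show (∀ x : A, bstar a x ∈ ({0} : Set A) ∧ bstar x a ∈ ({0} : Set A)) ↔ _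
  simp only [Set.mem_singleton_iff]
  rfl

end Aux

section PartI

open LeftBrace

variable {A : Type u} [LeftBrace A] {a : A}

lemma sq_mul_zsmul (h : bstar a a = 0) (n : ℤ) : a * (n • a) = (n + 1) • a := by
  have hb : bstar a (n • a) = 0 := by rw [lb_bstar_zsmul, h, smul_zero]
  rw [lb_mul_eq, hb]; module

lemma sq_inv_mul_zsmul (h : bstar a a = 0) (n : ℤ) : a⁻¹ * (n • a) = (n - 1) • a := by
  have h1 := sq_mul_zsmul h (n - 1)
  have h2 : a * ((n - 1) • a) = n • a := by rw [h1]; module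
  rw [← h2, ← mul_assoc, inv_mul_cancel, lb_one_eq_zero, lb_zero_mul]

lemma sq_zsmul_mul (h : bstar a a = 0) (m n : ℤ) : (m • a) * (n • a) = (m + n) • a := by
  induction m using Int.induction_on with
  | zero => rw [zero_zsmul, lb_zero_mul, zero_add]
  | succ i ih =>
      rw [← sq_mul_zsmul h i, mul_assoc, ih, sq_mul_zsmul h]
      module
  | pred i ih =>
      rw [show ((-(i:ℤ) - 1)) • a = a⁻¹ * ((-(i:ℤ)) • a) from (sq_inv_mul_zsmul h _).symm,
        mul_assoc, ih, sq_inv_mul_zsmul h]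
      module

end PartI

open LeftBrace in
/-- **Lemma (extra1).** Let `A` be a left brace, `a ∈ A`.
(i) If `a ⋆ a = 0` then `br(a) = ⟨a⟩` and multiplication coincides with addition on `br(a)`;
(ii) if `a ∈ ζ(⋆,A)` then `⟨a⟩` is an ideal of `A`;
(iii) if `a ∈ ζ₂(⋆,A)` then `br(a) = ⟨a⟩ + ⟨a ⋆ a⟩`. -/
theorem braceClosure_singleton_eq
    {A : Type u} [LeftBrace A] (a : A) :
    (bstar a a = 0 →
      braceClosure {a} = ((AddSubgroup.zmultiples a : AddSubgroup A) : Set A) ∧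
      ∀ x ∈ braceClosure {a}, ∀ y ∈ braceClosure {a}, x * y = x + y) ∧
    (a ∈ starCenter A →
      IsIdeal ((AddSubgroup.zmultiples a : AddSubgroup A) : Set A)) ∧
    (a ∈ zetaNat A 2 →
      braceClosure {a} = {x : A | ∃ m n : ℤ, x = m • a + n • bstar a a}) := by
  refine ⟨?_, ?_, ?_⟩
  · -- Part (i)
    intro h
    have hsub : IsSubbrace ((AddSubgroup.zmultiples a : AddSubgroup A) : Set A) := by
      refine ⟨(AddSubgroup.zmultiples a).zero_mem,
        fun hx hy => (AddSubgroup.zmultiples a).add_mem hx hy,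
        fun hx => (AddSubgroup.zmultiples a).neg_mem hx, ?_, ?_⟩
      · intro x y hx hy
        rw [SetLike.mem_coe, AddSubgroup.mem_zmultiples_iff] at hx hy
        obtain ⟨m, rfl⟩ := hx
        obtain ⟨n, rfl⟩ := hy
        rw [sq_zsmul_mul h]
        exact AddSubgroup.mem_zmultiples_iff.mpr ⟨m + n, rfl⟩
      · intro x hx
        rw [SetLike.mem_coe, AddSubgroup.mem_zmultiples_iff] at hx
        obtain ⟨m, rfl⟩ := hx
        have h1 : (m • a) * ((-m) • a) = 1 := by
          rw [sq_zsmul_mul h, add_neg_cancel, zero_zsmul, lb_one_eq_zero]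
        rw [inv_eq_of_mul_eq_one_right h1]
        exact AddSubgroup.mem_zmultiples_iff.mpr ⟨-m, rfl⟩
    have heq : braceClosure {a} = ((AddSubgroup.zmultiples a : AddSubgroup A) : Set A) := by
      apply subset_antisymm
      · exact Set.sInter_subset_of_mem
          ⟨hsub, Set.singleton_subset_iff.mpr (AddSubgroup.mem_zmultiples a)⟩
      · intro x hx
        rw [SetLike.mem_coe, AddSubgroup.mem_zmultiples_iff] at hx
        obtain ⟨n, rfl⟩ := hx
        exact Set.mem_sInter.mpr fun T hT => hT.1.zsmul_mem (hT.2 rfl) n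
    refine ⟨heq, ?_⟩
    intro x hx y hy
    rw [heq, SetLike.mem_coe, AddSubgroup.mem_zmultiples_iff] at hx hy
    obtain ⟨m, rfl⟩ := hx
    obtain ⟨n, rfl⟩ := hy
    rw [sq_zsmul_mul h, add_zsmul]
  · -- Part (ii)
    intro ha
    have hz : ∀ x ∈ ((AddSubgroup.zmultiples a : AddSubgroup A) : Set A), x ∈ starCenter A := by
      intro x hx
      rw [SetLike.mem_coe, AddSubgroup.mem_zmultiples_iff] at hx
      obtain ⟨n, rfl⟩ := hx
      exact starCenter_zsmul ha n
    refine ⟨Set.subset_univ _, ?_, isSubbrace_univ, ?_, ?_⟩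
    · refine ⟨(AddSubgroup.zmultiples a).zero_mem,
        fun hx hy => (AddSubgroup.zmultiples a).add_mem hx hy,
        fun hx => (AddSubgroup.zmultiples a).neg_mem hx, ?_, ?_⟩
      · intro x y hx hy
        rw [central_mul (hz x hx) y]
        exact (AddSubgroup.zmultiples a).add_mem hx hy
      · intro x hx
        rw [central_inv_eq_neg (hz x hx)]
        exact (AddSubgroup.zmultiples a).neg_mem hx
    · intro x _ z hzm
      rw [(hz z hzm x).2]
      exact (AddSubgroup.zmultiples a).zero_mem
    · intro x _ z hzm
      rw [(hz z hzm x).1]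
      exact (AddSubgroup.zmultiples a).zero_mem
  · -- Part (iii)
    intro ha
    have ha' : ∀ x : A, bstar a x ∈ starCenter A ∧ bstar x a ∈ starCenter A := by
      intro x
      have h : bstar a x ∈ zetaNat A 1 ∧ bstar x a ∈ zetaNat A 1 := ha x
      rw [zetaNat_one_eq] at h
      exact h
    set c := bstar a a with hc_def
    have hc : c ∈ starCenter A := (ha' a).1
    have hac : bstar a c = 0 := (hc a).2
    have key1 : ∀ m n : ℤ, a * (m • a + n • c) = (m + 1) • a + (m + n) • c := by
      intro m n
      have hb : bstar a (m • a + n • c) = m • c := by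
        rw [lb_bstar_add, lb_bstar_zsmul, lb_bstar_zsmul, hac, smul_zero, add_zero, ← hc_def]
      rw [lb_mul_eq, hb]; module
    have key2 : ∀ m n : ℤ, a⁻¹ * (m • a + n • c) = (m - 1) • a + (n - m + 1) • c := by
      intro m n
      have h2 : a * ((m - 1) • a + (n - m + 1) • c) = m • a + n • c := by
        rw [key1]; module
      rw [← h2, ← mul_assoc, inv_mul_cancel, lb_one_eq_zero, lb_zero_mul]
    have key1' : ∀ m n : ℤ, (m + 1) • a + n • c = a * (m • a + (n - m) • c) := by
      intro m n; rw [key1]; module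
    have key2' : ∀ m n : ℤ, (m - 1) • a + n • c = a⁻¹ * (m • a + (n + m - 1) • c) := by
      intro m n; rw [key2]; module
    set S := {x : A | ∃ m n : ℤ, x = m • a + n • c} with hS_def
    have hzero : (0 : A) ∈ S := ⟨0, 0, by module⟩
    have hadd : ∀ {x y : A}, x ∈ S → y ∈ S → x + y ∈ S := by
      rintro x y ⟨m, n, rfl⟩ ⟨m', n', rfl⟩
      exact ⟨m + m', n + n', by module⟩
    have hneg : ∀ {x : A}, x ∈ S → -x ∈ S := by
      rintro x ⟨m, n, rfl⟩
      exact ⟨-m, -n, by module⟩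
    have haS : a ∈ S := ⟨1, 0, by module⟩
    have hamul : ∀ x ∈ S, a * x ∈ S := by
      rintro x ⟨m, n, rfl⟩
      rw [key1]
      exact ⟨m + 1, m + n, rfl⟩
    have hainvmul : ∀ x ∈ S, a⁻¹ * x ∈ S := by
      rintro x ⟨m, n, rfl⟩
      rw [key2]
      exact ⟨m - 1, n - m + 1, rfl⟩
    have hmul : ∀ {x y : A}, x ∈ S → y ∈ S → x * y ∈ S := by
      rintro x y ⟨m, n, rfl⟩ hy
      induction m using Int.induction_on generalizing n with
      | zero =>
          rw [zero_zsmul, zero_add, central_mul (starCenter_zsmul hc n)]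
          exact hadd ⟨0, n, by module⟩ hy
      | succ i ih =>
          rw [key1' i n, mul_assoc]
          exact hamul _ (ih _)
      | pred i ih =>
          rw [key2' (-(i : ℤ)) n, mul_assoc]
          exact hainvmul _ (ih _)
    have hzpow : ∀ m : ℤ, ∃ t : ℤ, a ^ m = m • a + t • c := by
      intro m
      induction m using Int.induction_on with
      | zero => exact ⟨0, by rw [zpow_zero, lb_one_eq_zero]; module⟩
      | succ i ih =>
          obtain ⟨t, ht⟩ := ih
          refine ⟨(i : ℤ) + t, ?_⟩
          rw [show ((i : ℤ) + 1) = 1 + (i : ℤ) by ring, zpow_add, zpow_one, ht, key1]; module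
      | pred i ih =>
          obtain ⟨t, ht⟩ := ih
          refine ⟨t - -(i : ℤ) + 1, ?_⟩
          rw [show (-(i : ℤ) - 1) = -1 + -(i : ℤ) by ring, zpow_add, zpow_neg_one, ht, key2]; module
    have hinv : ∀ {x : A}, x ∈ S → x⁻¹ ∈ S := by
      rintro x ⟨m, n, rfl⟩
      obtain ⟨t, ht⟩ := hzpow m
      have hx : m • a + n • c = a ^ m * ((n - t) • c) := by
        rw [mul_central (starCenter_zsmul hc (n - t)), ht]; module
      obtain ⟨t', ht'⟩ := hzpow (-m)
      rw [hx, mul_inv_rev, central_inv_eq_neg (starCenter_zsmul hc (n - t)), ← zpow_neg,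
        central_mul (starCenter_neg (starCenter_zsmul hc (n - t))), ht']
      exact ⟨-m, t' - (n - t), by module⟩
    have hSsub : IsSubbrace S := ⟨hzero, hadd, hneg, hmul, hinv⟩
    apply subset_antisymm
    · exact Set.sInter_subset_of_mem ⟨hSsub, Set.singleton_subset_iff.mpr haS⟩
    · rintro x ⟨m, n, rfl⟩
      refine Set.mem_sInter.mpr fun T hT => ?_
      have haT : a ∈ T := hT.2 rfl
      have hcT : c ∈ T := by
        have h1 : a * a ∈ T := hT.1.mul_mem haT haT
        have h2 : c = a * a + (-a + -a) := by rw [hc_def, bstar]; abel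
        rw [h2]
        exact hT.1.add_mem h1 (hT.1.add_mem (hT.1.neg_mem haT) (hT.1.neg_mem haT))
      exact hT.1.add_mem (hT.1.zsmul_mem haT m) (hT.1.zsmul_mem hcT n)
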